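/- (Bound on the marginal-likelihood functional at and above the true smoothness, used in Lemma 1.) For every σ, β, M > 0 there exist C > 0 and K > 0 such that for all integers m ≥ K and all reals n with n/m ≥ K the following holds: set k = n/(σ²·m) and let θ₀ ∈ ℓ² be defined by θ₀,ᵢ² = M²·i^{-1-2β} for all integers i ≥ (n/(σ²·√m))^{1/(1+2β)} and θ₀,ᵢ = 0 otherwise. Then for every α with β ≤ α ≤ β + 1/2, h_k(α) := ((1+2α)/(k^{1/(1+2α)}·log k))·Σ_{i=1}^∞ k²·i^{1+2α}·θ₀,ᵢ²·(log i)/(k + i^{1+2α})² ≤ C·m^{-2α/(1+2α)}·log m. -/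

import Mathlib

open Real Filter


/-- The squared coefficients of the 'difficult' signal: `θ₀,ᵢ² = M² i^{-1-2β}` for
integers `i ≥ (n/(σ²√m))^{1/(1+2β)}` and `θ₀,ᵢ = 0` otherwise (coordinate `i : ℕ`
corresponds to the integer `i + 1`). -/
noncomputable def counterSignalSq (σ β M n : ℝ) (m : ℕ) (i : ℕ) : ℝ :=
  if (n / (σ ^ 2 * Real.sqrt (m : ℝ))) ^ (1 / (1 + 2 * β)) ≤ (i : ℝ) + 1 then
    M ^ 2 * ((i : ℝ) + 1) ^ (-1 - 2 * β)
  else 0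

/-- The marginal-likelihood functional
`h_k(α) = ((1+2α)/(k^{1/(1+2α)} log k)) Σᵢ k² i^{1+2α} θ₀,ᵢ² (log i)/(k + i^{1+2α})²`. -/
noncomputable def hFun (σ β M n : ℝ) (m : ℕ) (α : ℝ) : ℝ :=
  let k := n / (σ ^ 2 * (m : ℝ))
  ((1 + 2 * α) / (k ^ (1 / (1 + 2 * α)) * Real.log k)) *
    ∑' i : ℕ, k ^ 2 * ((i : ℝ) + 1) ^ (1 + 2 * α) * counterSignalSq σ β M n m i
      * Real.log ((i : ℝ) + 1) / (k + ((i : ℝ) + 1) ^ (1 + 2 * α)) ^ 2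

lemma aux_one_sub_rpow {c t : ℝ} (hc : 0 < c) (hc1 : c ≤ 1) (ht : 0 ≤ t) (ht1 : t ≤ 1) :
    (1 - t) ^ c ≤ 1 - c * t := by
  have h := rpow_one_add_le_one_add_mul_self (s := -t) (by linarith) hc.le hc1
  rw [show (1 : ℝ) + -t = 1 - t by ring] at h
  linarith [h]

lemma aux_telescope {c x : ℝ} (hc : 0 < c) (hx : 1 ≤ x) :
    min c 1 / 2 * x ^ (-(1 + c)) ≤ x ^ (-c) - (x + 1) ^ (-c) := by
  have hx0 : 0 < x := lt_of_lt_of_le one_pos hx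
  have hx10 : 0 < x + 1 := by linarith
  set t : ℝ := 1 / (x + 1) with ht_def
  have ht0 : 0 < t := by positivity
  have ht1 : t ≤ 1 := by rw [ht_def]; rw [div_le_one hx10]; linarith
  have hmc0 : 0 < min c 1 := lt_min hc one_pos
  have hkey : min c 1 * t ≤ 1 - (1 - t) ^ c := by
    rcases le_total c 1 with h | h
    · rw [min_eq_left h]
      have := aux_one_sub_rpow hc h ht0.le ht1
      linarith
    · rw [min_eq_right h]
      have h1t : (1 - t) ^ c ≤ (1 - t) ^ (1 : ℝ) :=
        Real.rpow_le_rpow_of_exponent_ge (by rw [ht_def]; rw [sub_pos, div_lt_one hx10]; linarith)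
          (by linarith) h
      rw [Real.rpow_one] at h1t; linarith
  have hxc0 : 0 < x ^ (-c) := Real.rpow_pos_of_pos hx0 _
  have hsub : (x + 1) ^ (-c) = x ^ (-c) * (1 - t) ^ c := by
    have h1t : 1 - t = x / (x + 1) := by rw [ht_def]; field_simp; ring
    have hxc : x ^ (-c) * x ^ c = 1 := by
      rw [← Real.rpow_add hx0]; simp
    calc (x + 1) ^ (-c) = 1 / (x + 1) ^ c := by
          rw [Real.rpow_neg hx10.le, one_div]
      _ = (x ^ (-c) * x ^ c) / (x + 1) ^ c := by rw [hxc]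
      _ = x ^ (-c) * (x ^ c / (x + 1) ^ c) := by ring
      _ = x ^ (-c) * (1 - t) ^ c := by rw [h1t, Real.div_rpow hx0.le hx10.le]
  have hrw : x ^ (-(1 + c)) = x ^ (-c) * x⁻¹ := by
    rw [← Real.rpow_neg_one x, ← Real.rpow_add hx0]; ring_nf
  have hXt : x⁻¹ ≤ 2 * t := by
    rw [ht_def, mul_one_div, inv_eq_one_div, div_le_div_iff₀ hx0 hx10]; linarith
  have h1 : x ^ (-c) * (min c 1 * t) ≤ x ^ (-c) * (1 - (1 - t) ^ c) :=
    mul_le_mul_of_nonneg_left hkey hxc0.le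
  have h2 : x ^ (-c) * x⁻¹ ≤ x ^ (-c) * (2 * t) :=
    mul_le_mul_of_nonneg_left hXt hxc0.le
  rw [hrw, hsub]
  nlinarith [h1, h2, hmc0.le, mul_le_mul_of_nonneg_left h2 (by positivity : (0:ℝ) ≤ min c 1 / 2)]

lemma aux_log_decay {β x₀ x : ℝ} (hβ : 0 < β) (h0 : Real.exp (1 / β) ≤ x₀) (hx : x₀ ≤ x) :
    Real.log x * x ^ (-β) ≤ Real.log x₀ * x₀ ^ (-β) := by
  have hx₀0 : 0 < x₀ := lt_of_lt_of_le (Real.exp_pos _) h0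
  have hx0 : 0 < x := lt_of_lt_of_le hx₀0 hx
  have hv0 : 0 < x ^ (-β) := Real.rpow_pos_of_pos hx0 _
  have hu0 : 0 < x₀ ^ (-β) := Real.rpow_pos_of_pos hx₀0 _
  have hvu : x ^ (-β) ≤ x₀ ^ (-β) :=
    Real.rpow_le_rpow_of_nonpos hx₀0 hx (by linarith)
  have hlx₀ : 1 / β ≤ Real.log x₀ := (Real.le_log_iff_exp_le hx₀0).2 h0
  have hlx₀' : 1 ≤ β * Real.log x₀ := by
    rw [div_le_iff₀ hβ] at hlx₀; linarith [hlx₀]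
  have hq0 : 0 < x / x₀ := by positivity
  have h1 : Real.log ((x / x₀) ^ β) ≤ (x / x₀) ^ β - 1 :=
    Real.log_le_sub_one_of_pos (Real.rpow_pos_of_pos hq0 _)
  rw [Real.log_rpow hq0, Real.log_div hx0.ne' hx₀0.ne'] at h1
  have h2 : (x / x₀) ^ β * x ^ (-β) = x₀ ^ (-β) := by
    rw [Real.div_rpow hx0.le hx₀0.le, Real.rpow_neg hx0.le, Real.rpow_neg hx₀0.le]
    field_simp
  have h3 : β * (Real.log x - Real.log x₀) * x ^ (-β) ≤ x₀ ^ (-β) - x ^ (-β) := by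
    have := mul_le_mul_of_nonneg_right h1 hv0.le
    nlinarith [this, h2]
  have h4 : 0 ≤ β * (Real.log x₀ * x₀ ^ (-β) - Real.log x * x ^ (-β)) := by
    nlinarith [mul_le_mul_of_nonneg_left hlx₀' (sub_nonneg.2 hvu)]
  nlinarith [h4, hβ]

lemma counterSignalSq_nonneg (σ β M n : ℝ) (m i : ℕ) : 0 ≤ counterSignalSq σ β M n m i := by
  unfold counterSignalSq
  split
  · positivity
  · exact le_refl 0

lemma hFun_eq (σ β M n : ℝ) (m : ℕ) (α : ℝ) :
    hFun σ β M n m α =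
      ((1 + 2 * α) / ((n / (σ ^ 2 * (m : ℝ))) ^ (1 / (1 + 2 * α)) * Real.log (n / (σ ^ 2 * (m : ℝ))))) *
        ∑' i : ℕ, (n / (σ ^ 2 * (m : ℝ))) ^ 2 * ((i : ℝ) + 1) ^ (1 + 2 * α) * counterSignalSq σ β M n m i
          * Real.log ((i : ℝ) + 1) / ((n / (σ ^ 2 * (m : ℝ))) + ((i : ℝ) + 1) ^ (1 + 2 * α)) ^ 2 := rfl

set_option maxHeartbeats 1000000 in
/-- Bound on the marginal-likelihood functional at and above the true smoothness (used in
Lemma 1): for every `σ, β, M > 0` there exist `C > 0` and `K > 0` such that for all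
integers `m ≥ K` and all reals `n` with `n/m ≥ K`, for every `β ≤ α ≤ β + 1/2` one has
`h_k(α) ≤ C m^{-2α/(1+2α)} log m`, where `k = n/(σ² m)` and `θ₀` is the difficult
signal. -/
theorem hFun_bound_above_true_smoothness
    (σ β M : ℝ) (hσ : 0 < σ) (hβ : 0 < β) (hM : 0 < M) :
    ∃ C K : ℝ, 0 < C ∧ 0 < K ∧
      ∀ m : ℕ, K ≤ (m : ℝ) → ∀ n : ℝ, K ≤ n / (m : ℝ) →
        ∀ α : ℝ, β ≤ α → α ≤ β + 1 / 2 →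
          hFun σ β M n m α ≤ C * (m : ℝ) ^ (-(2 * α / (1 + 2 * α))) * Real.log (m : ℝ) := by
  have hb1 : (1:ℝ) < 1 + 2 * β := by linarith
  have hmcpos : 0 < min (1 + 2 * β - 1) 1 := lt_min (by linarith) one_pos
  refine ⟨2 * ((1 + 2 * β) + 1) * M ^ 2 / ((1 + 2 * β) * min ((1 + 2 * β) - 1) 1),
    max (σ ^ 2 * Real.exp ((1 + 2 * β) / β + 1)) (Real.exp 2), ?_, ?_, ?_⟩
  · have : (0:ℝ) < (1 + 2 * β) * min ((1 + 2 * β) - 1) 1 := by positivity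
    positivity
  · exact lt_of_lt_of_le (by positivity) (le_max_left _ _)
  intro m hm n hn α hα1 hα2
  -- basic facts about m
  have hm2 : Real.exp 2 ≤ (m : ℝ) := le_trans (le_max_right _ _) hm
  have hm1 : (1:ℝ) ≤ (m:ℝ) := le_trans (by linarith [Real.add_one_le_exp (2:ℝ)]) hm2
  have hm0 : (0:ℝ) < (m:ℝ) := lt_of_lt_of_le one_pos hm1
  have hLm : 2 ≤ Real.log (m:ℝ) := (Real.le_log_iff_exp_le hm0).2 hm2
  have hσ2 : (0:ℝ) < σ ^ 2 := by positivity
  rw [hFun_eq]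
  -- abbreviations
  set b : ℝ := 1 + 2 * β with hb_def
  set a : ℝ := 1 + 2 * α with ha_def
  set k : ℝ := n / (σ ^ 2 * (m : ℝ)) with hk_def
  have hba : b ≤ a := by rw [hb_def, ha_def]; linarith
  have hab1 : a ≤ b + 1 := by rw [hb_def, ha_def]; linarith
  have ha1 : (1:ℝ) < a := lt_of_lt_of_le hb1 hba
  have hb0 : (0:ℝ) < b := by linarith
  have ha0 : (0:ℝ) < a := by linarith
  -- facts about k
  have hkeq : k = (n / (m:ℝ)) / σ ^ 2 := by rw [hk_def, div_div, mul_comm]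
  have hkE : Real.exp (b / β + 1) ≤ k := by
    have h1 : σ ^ 2 * Real.exp (b / β + 1) ≤ n / (m:ℝ) :=
      le_trans (le_max_left _ _) hn
    rw [hkeq, le_div_iff₀ hσ2]
    linarith [h1]
  have hk1 : (1:ℝ) < k := by
    have h0 : (0:ℝ) < b / β + 1 := by positivity
    linarith [Real.add_one_le_exp (b / β + 1), hkE]
  have hk0 : (0:ℝ) < k := lt_trans one_pos hk1
  have hL1 : 1 ≤ Real.log k := by
    apply (Real.le_log_iff_exp_le hk0).2
    refine le_trans ?_ hkE
    apply Real.exp_le_exp.2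
    have : (0:ℝ) < b / β := by positivity
    linarith
  have hL0 : (0:ℝ) < Real.log k := lt_of_lt_of_le one_pos hL1
  -- facts about sqrt m and i₀
  have hsm1 : (1:ℝ) ≤ Real.sqrt (m:ℝ) := by
    rw [show (1:ℝ) = Real.sqrt 1 from (Real.sqrt_one).symm]
    exact Real.sqrt_le_sqrt hm1
  have hsm0 : (0:ℝ) < Real.sqrt (m:ℝ) := lt_of_lt_of_le one_pos hsm1
  have hkm1 : Real.exp (b / β) ≤ k * Real.sqrt (m:ℝ) := by
    have h1 : Real.exp (b / β) ≤ Real.exp (b / β + 1) := Real.exp_le_exp.2 (by linarith)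
    calc Real.exp (b / β) ≤ k := le_trans h1 hkE
      _ ≤ k * Real.sqrt (m:ℝ) := le_mul_of_one_le_right hk0.le hsm1
  have hkm0 : (0:ℝ) < k * Real.sqrt (m:ℝ) := by positivity
  set i₀ : ℝ := (k * Real.sqrt (m:ℝ)) ^ (1 / b) with hi0_def
  have hthr : n / (σ ^ 2 * Real.sqrt (m:ℝ)) = k * Real.sqrt (m:ℝ) := by
    have hss : Real.sqrt (m:ℝ) * Real.sqrt (m:ℝ) = (m:ℝ) := Real.mul_self_sqrt hm0.le
    have h1 : σ ^ 2 * (m:ℝ) = (σ ^ 2 * Real.sqrt (m:ℝ)) * Real.sqrt (m:ℝ) := by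
      rw [mul_assoc, hss]
    rw [hk_def, div_mul_eq_mul_div, div_eq_div_iff (by positivity) (by positivity)]
    linear_combination (-(n * σ ^ 2)) * hss
  have hi0e : Real.exp (1 / β) ≤ i₀ := by
    have h1 : (Real.exp (b / β)) ^ (1 / b) ≤ i₀ := by
      rw [hi0_def]
      exact Real.rpow_le_rpow (Real.exp_pos _).le hkm1 (by positivity)
    rwa [← Real.exp_mul, show b / β * (1 / b) = 1 / β by
      rw [div_mul_div_comm, mul_one, mul_comm β b, ← div_div, div_self hb0.ne']] at h1
  have hi01 : (1:ℝ) ≤ i₀ := by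
    have h1β : (0:ℝ) < 1 / β := by positivity
    linarith [Real.add_one_le_exp (1 / β), hi0e]
  have hi00 : (0:ℝ) < i₀ := lt_of_lt_of_le one_pos hi01
  have hlogi0 : 1 / β ≤ Real.log i₀ := (Real.le_log_iff_exp_le hi00).2 hi0e
  have hlogi0' : (0:ℝ) < Real.log i₀ := lt_of_lt_of_le (by positivity) hlogi0
  -- the constants
  set c : ℝ := b - 1 with hc_def
  have hc0 : (0:ℝ) < c := by rw [hc_def]; linarith
  set mc : ℝ := min c 1 with hmc_def
  have hmc0 : (0:ℝ) < mc := lt_min hc0 one_pos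
  set A : ℝ := k ^ 2 * M ^ 2 * Real.log i₀ * i₀ ^ (-a) with hA_def
  have hA0 : (0:ℝ) ≤ A := by
    rw [hA_def]
    have := hlogi0'.le
    positivity
  -- the telescoping majorant
  set g : ℕ → ℝ := fun i => min (((i:ℝ) + 1) ^ (-c)) (i₀ ^ (-c)) with hg_def
  have hg_anti : ∀ i : ℕ, g (i + 1) ≤ g i := by
    intro i
    apply min_le_min _ le_rfl
    apply Real.rpow_le_rpow_of_nonpos (by positivity)
    · push_cast; linarith
    · linarith
  have hg0 : ∀ i : ℕ, 0 ≤ g i := by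
    intro i
    apply le_min <;> positivity
  have hgtend : Tendsto g atTop (nhds 0) := by
    apply squeeze_zero hg0 (fun i => min_le_left _ _)
    have h1 : Tendsto (fun i : ℕ => ((i:ℝ) + 1)) atTop atTop :=
      tendsto_atTop_add_const_right _ 1 tendsto_natCast_atTop_atTop
    exact (tendsto_rpow_neg_atTop hc0).comp h1
  have hg0eq : g 0 = i₀ ^ (-c) := by
    have h1 : i₀ ^ (-c) ≤ ((0:ℝ) + 1) ^ (-c) := by
      rw [zero_add, Real.one_rpow]
      exact Real.rpow_le_one_of_one_le_of_nonpos hi01 (by linarith)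
    rw [hg_def]
    simp only [Nat.cast_zero]
    exact min_eq_right h1
  have hgsum : HasSum (fun i => g i - g (i + 1)) (i₀ ^ (-c)) := by
    have hnn : ∀ i : ℕ, 0 ≤ g i - g (i + 1) := fun i => sub_nonneg.2 (hg_anti i)
    rw [hasSum_iff_tendsto_nat_of_nonneg hnn]
    have heq : ∀ nn : ℕ, ∑ i ∈ Finset.range nn, (g i - g (i + 1)) = g 0 - g nn :=
      fun nn => Finset.sum_range_sub' g nn
    have htt : Tendsto (fun nn : ℕ => g 0 - g nn) atTop (nhds (g 0 - 0)) :=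
      tendsto_const_nhds.sub hgtend
    rw [sub_zero, hg0eq] at htt
    refine Tendsto.congr (fun nn => ?_) htt
    rw [heq nn, hg0eq]
  have hψsum : HasSum (fun i => (2 / mc * A) * (g i - g (i + 1))) (2 / mc * A * i₀ ^ (-c)) := by
    exact hgsum.mul_left _
  -- pointwise bound on the summand
  have hfψ : ∀ i : ℕ,
      k ^ 2 * ((i:ℝ) + 1) ^ a * counterSignalSq σ β M n m i * Real.log ((i:ℝ) + 1)
        / (k + ((i:ℝ) + 1) ^ a) ^ 2 ≤ (2 / mc * A) * (g i - g (i + 1)) := by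
    intro i
    have hx01 : (1:ℝ) ≤ (i:ℝ) + 1 := by
      have := Nat.cast_nonneg (α := ℝ) i; linarith
    have hx0 : (0:ℝ) < (i:ℝ) + 1 := lt_of_lt_of_le one_pos hx01
    have hψ0 : 0 ≤ (2 / mc * A) * (g i - g (i + 1)) :=
      mul_nonneg (mul_nonneg (div_nonneg (by norm_num) hmc0.le) hA0)
        (sub_nonneg.2 (hg_anti i))
    by_cases hcase : (n / (σ ^ 2 * Real.sqrt (m:ℝ))) ^ (1 / (1 + 2 * β)) ≤ (i : ℝ) + 1
    · -- the signal is nonzero here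
      have hix : i₀ ≤ (i:ℝ) + 1 := by
        rw [hi0_def, hb_def]
        rwa [hthr] at hcase
      have hcs : counterSignalSq σ β M n m i = M ^ 2 * ((i:ℝ) + 1) ^ (-b) := by
        simp only [counterSignalSq]
        rw [if_pos hcase, show (-1 - 2 * β : ℝ) = -b by rw [hb_def]; ring]
      have hlogx0 : (0:ℝ) ≤ Real.log ((i:ℝ) + 1) := Real.log_nonneg hx01
      have hxa0 : (0:ℝ) < ((i:ℝ) + 1) ^ a := Real.rpow_pos_of_pos hx0 _
      -- the telescoping bound
      have hgi : g i = ((i:ℝ) + 1) ^ (-c) := by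
        simp only [hg_def]
        exact min_eq_left
          (Real.rpow_le_rpow_of_nonpos hi00 hix (by linarith))
      have hgi1 : g (i + 1) = ((i:ℝ) + 1 + 1) ^ (-c) := by
        simp only [hg_def]
        push_cast
        exact min_eq_left
          (Real.rpow_le_rpow_of_nonpos hi00 (by linarith) (by linarith))
      have hxb : ((i:ℝ) + 1) ^ (-b) ≤ 2 / mc * (g i - g (i + 1)) := by
        have htel := aux_telescope hc0 hx01
        rw [show -(1 + c) = -b by rw [hc_def]; ring, ← hmc_def] at htel
        have h2 : (2 / mc) * (mc / 2 * ((i:ℝ) + 1) ^ (-b))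
            ≤ (2 / mc) * (((i:ℝ) + 1) ^ (-c) - ((i:ℝ) + 1 + 1) ^ (-c)) :=
          mul_le_mul_of_nonneg_left htel (div_nonneg (by norm_num) hmc0.le)
        have h3 : (2 / mc) * (mc / 2 * ((i:ℝ) + 1) ^ (-b)) = ((i:ℝ) + 1) ^ (-b) := by
          field_simp
        rw [hgi, hgi1]
        linarith [h2, h3]
      -- the log-decay bound
      have hstep : Real.log ((i:ℝ) + 1) * ((i:ℝ) + 1) ^ (-(a + b))
          ≤ Real.log i₀ * i₀ ^ (-a) * ((i:ℝ) + 1) ^ (-b) := by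
        have e1 : ((i:ℝ) + 1) ^ (-β) * (((i:ℝ) + 1) ^ (β - a) * ((i:ℝ) + 1) ^ (-b))
            = ((i:ℝ) + 1) ^ (-(a + b)) := by
          rw [← Real.rpow_add hx0, ← Real.rpow_add hx0,
            show -β + (β - a + -b) = -(a + b) by ring]
        have e2 : Real.log ((i:ℝ) + 1) * ((i:ℝ) + 1) ^ (-(a + b))
            = (Real.log ((i:ℝ) + 1) * ((i:ℝ) + 1) ^ (-β)) * ((i:ℝ) + 1) ^ (β - a)
              * ((i:ℝ) + 1) ^ (-b) := by
          rw [mul_assoc, mul_assoc, e1]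
        have h4 : Real.log ((i:ℝ) + 1) * ((i:ℝ) + 1) ^ (-β) ≤ Real.log i₀ * i₀ ^ (-β) :=
          aux_log_decay hβ hi0e hix
        have h5 : ((i:ℝ) + 1) ^ (β - a) ≤ i₀ ^ (β - a) :=
          Real.rpow_le_rpow_of_nonpos hi00 hix (by linarith)
        have h6 : (Real.log ((i:ℝ) + 1) * ((i:ℝ) + 1) ^ (-β)) * ((i:ℝ) + 1) ^ (β - a)
            ≤ (Real.log i₀ * i₀ ^ (-β)) * i₀ ^ (β - a) := by
          apply mul_le_mul h4 h5 (Real.rpow_nonneg hx0.le _)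
          exact mul_nonneg hlogi0'.le (Real.rpow_nonneg hi00.le _)
        have e3 : (Real.log i₀ * i₀ ^ (-β)) * i₀ ^ (β - a) = Real.log i₀ * i₀ ^ (-a) := by
          rw [mul_assoc, ← Real.rpow_add hi00, show -β + (β - a) = -a by ring]
        rw [e2]
        calc (Real.log ((i:ℝ) + 1) * ((i:ℝ) + 1) ^ (-β)) * ((i:ℝ) + 1) ^ (β - a)
              * ((i:ℝ) + 1) ^ (-b)
            ≤ (Real.log i₀ * i₀ ^ (-β)) * i₀ ^ (β - a) * ((i:ℝ) + 1) ^ (-b) :=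
              mul_le_mul_of_nonneg_right h6 (Real.rpow_nonneg hx0.le _)
          _ = Real.log i₀ * i₀ ^ (-a) * ((i:ℝ) + 1) ^ (-b) := by rw [e3]
      calc k ^ 2 * ((i:ℝ) + 1) ^ a * counterSignalSq σ β M n m i * Real.log ((i:ℝ) + 1)
            / (k + ((i:ℝ) + 1) ^ a) ^ 2
          = k ^ 2 * M ^ 2 * Real.log ((i:ℝ) + 1)
              * (((i:ℝ) + 1) ^ a * ((i:ℝ) + 1) ^ (-b) / (k + ((i:ℝ) + 1) ^ a) ^ 2) := by
            rw [hcs]; ring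
        _ ≤ k ^ 2 * M ^ 2 * Real.log ((i:ℝ) + 1)
              * (((i:ℝ) + 1) ^ a * ((i:ℝ) + 1) ^ (-b) / (((i:ℝ) + 1) ^ a) ^ 2) := by
            apply mul_le_mul_of_nonneg_left _
              (mul_nonneg (by positivity) hlogx0)
            apply div_le_div_of_nonneg_left
              (by positivity) (by positivity) (pow_le_pow_left₀ hxa0.le (by linarith) 2)
        _ = k ^ 2 * M ^ 2 * (Real.log ((i:ℝ) + 1) * ((i:ℝ) + 1) ^ (-(a + b))) := by
            rw [sq (((i:ℝ) + 1) ^ a), ← Real.rpow_add hx0, ← Real.rpow_add hx0,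
              ← Real.rpow_sub hx0, show a + -b - (a + a) = -(a + b) by ring]
            ring
        _ ≤ k ^ 2 * M ^ 2 * (Real.log i₀ * i₀ ^ (-a) * ((i:ℝ) + 1) ^ (-b)) :=
            mul_le_mul_of_nonneg_left hstep (mul_nonneg (sq_nonneg k) (sq_nonneg M))
        _ = A * ((i:ℝ) + 1) ^ (-b) := by rw [hA_def]; ring
        _ ≤ A * (2 / mc * (g i - g (i + 1))) := mul_le_mul_of_nonneg_left hxb hA0
        _ = (2 / mc * A) * (g i - g (i + 1)) := by ring
    · -- the signal vanishes here
      have hcs : counterSignalSq σ β M n m i = 0 := by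
        simp only [counterSignalSq]
        rw [if_neg hcase]
      rw [hcs]
      simpa using hψ0
  -- summability and bound on the series
  have hf_nonneg : ∀ i : ℕ, 0 ≤ k ^ 2 * ((i:ℝ) + 1) ^ a * counterSignalSq σ β M n m i
      * Real.log ((i:ℝ) + 1) / (k + ((i:ℝ) + 1) ^ a) ^ 2 := by
    intro i
    have hx01 : (1:ℝ) ≤ (i:ℝ) + 1 := by
      have := Nat.cast_nonneg (α := ℝ) i; linarith
    have h1 : (0:ℝ) ≤ Real.log ((i:ℝ) + 1) := Real.log_nonneg hx01
    have h2 := counterSignalSq_nonneg σ β M n m i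
    positivity
  have hfs : Summable (fun i : ℕ => k ^ 2 * ((i:ℝ) + 1) ^ a * counterSignalSq σ β M n m i
      * Real.log ((i:ℝ) + 1) / (k + ((i:ℝ) + 1) ^ a) ^ 2) :=
    Summable.of_nonneg_of_le hf_nonneg hfψ hψsum.summable
  have hts : (∑' i : ℕ, k ^ 2 * ((i:ℝ) + 1) ^ a * counterSignalSq σ β M n m i
      * Real.log ((i:ℝ) + 1) / (k + ((i:ℝ) + 1) ^ a) ^ 2) ≤ 2 / mc * A * i₀ ^ (-c) :=
    le_trans (Summable.tsum_le_tsum hfψ hfs hψsum.summable) (le_of_eq hψsum.tsum_eq)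
  have hpref : 0 ≤ a / (k ^ (1 / a) * Real.log k) :=
    div_nonneg ha0.le (mul_nonneg (Real.rpow_nonneg hk0.le _) hL0.le)
  refine le_trans (mul_le_mul_of_nonneg_left hts hpref) ?_
  -- final computation
  have hlogi0eq : Real.log i₀ = (Real.log k + Real.log (m:ℝ) / 2) / b := by
    rw [hi0_def, Real.log_rpow hkm0, Real.log_mul hk0.ne' hsm0.ne', Real.log_sqrt hm0.le]
    ring
  have hpow : i₀ ^ (-a) * i₀ ^ (-c)
      = k ^ ((1 - a - b) / b) * (m:ℝ) ^ ((1 - a - b) / (2 * b)) := by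
    have e1 : -a + -c = 1 - a - b := by rw [hc_def]; ring
    have e2 : 1 / b * (-a + -c) = (1 - a - b) / b := by
      rw [e1, one_div_mul_eq_div]
    have e3 : 1 / 2 * ((1 - a - b) / b) = (1 - a - b) / (2 * b) := by
      rw [div_mul_div_comm, one_mul]
    rw [← Real.rpow_add hi00, hi0_def, ← Real.rpow_mul hkm0.le, e2,
      Real.mul_rpow hk0.le (Real.sqrt_nonneg _), Real.sqrt_eq_rpow,
      ← Real.rpow_mul hm0.le, e3]
  have hfinaleq : a / (k ^ (1 / a) * Real.log k) * (2 / mc * A * i₀ ^ (-c))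
      = (2 * a * M ^ 2 / (b * mc)) * (k ^ 2 * k ^ ((1 - a - b) / b) / k ^ (1 / a))
        * ((m:ℝ) ^ ((1 - a - b) / (2 * b)))
        * ((Real.log k + Real.log (m:ℝ) / 2) / Real.log k) := by
    rw [hA_def, hlogi0eq]
    have e1 : a / (k ^ (1 / a) * Real.log k)
        * (2 / mc * (k ^ 2 * M ^ 2 * ((Real.log k + Real.log (m:ℝ) / 2) / b) * i₀ ^ (-a))
          * i₀ ^ (-c))
        = a / (k ^ (1 / a) * Real.log k)
          * (2 / mc * (k ^ 2 * M ^ 2 * ((Real.log k + Real.log (m:ℝ) / 2) / b))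
            * (i₀ ^ (-a) * i₀ ^ (-c))) := by ring
    rw [e1, hpow]
    have hk1a : k ^ (1 / a) ≠ 0 := ne_of_gt (Real.rpow_pos_of_pos hk0 _)
    field_simp
  rw [hfinaleq]
  -- bound the four factors
  have hF1 : 2 * a * M ^ 2 / (b * mc) ≤ 2 * (b + 1) * M ^ 2 / (b * mc) := by
    apply div_le_div_of_nonneg_right ?_ (mul_pos hb0 hmc0).le
    have h1 : 0 ≤ (b + 1 - a) * M ^ 2 := mul_nonneg (by linarith) (sq_nonneg M)
    linarith [h1]
  have hFk0 : 0 ≤ k ^ 2 * k ^ ((1 - a - b) / b) / k ^ (1 / a) :=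
    div_nonneg (mul_nonneg (sq_nonneg k) (Real.rpow_nonneg hk0.le _))
      (Real.rpow_nonneg hk0.le _)
  have hF2 : k ^ 2 * k ^ ((1 - a - b) / b) / k ^ (1 / a) ≤ 1 := by
    have hE : (2:ℝ) + (1 - a - b) / b - 1 / a = ((a - 1) * (b - a)) / (a * b) := by
      field_simp; ring
    have hEneg : (2:ℝ) + (1 - a - b) / b - 1 / a ≤ 0 := by
      rw [hE]
      apply div_nonpos_of_nonpos_of_nonneg _ (by positivity)
      have h1 : 0 ≤ (a - 1) * (a - b) := mul_nonneg (by linarith) (by linarith)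
      have e : (a - 1) * (b - a) = -((a - 1) * (a - b)) := by ring
      linarith [h1, e]
    calc k ^ 2 * k ^ ((1 - a - b) / b) / k ^ (1 / a)
        = k ^ ((2:ℝ) + (1 - a - b) / b - 1 / a) := by
          rw [← Real.rpow_two, ← Real.rpow_add hk0, ← Real.rpow_sub hk0]
      _ ≤ 1 := Real.rpow_le_one_of_one_le_of_nonpos hk1.le hEneg
  have hF3 : (m:ℝ) ^ ((1 - a - b) / (2 * b)) ≤ (m:ℝ) ^ (-(2 * α / a)) := by
    apply Real.rpow_le_rpow_of_exponent_le hm1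
    have h2α : 2 * α = a - 1 := by rw [ha_def]; ring
    rw [h2α]
    have hkey : (0:ℝ) ≤ a ^ 2 - a * b - a + 2 * b := by
      have h1 : 0 ≤ a * (a - b) := mul_nonneg ha0.le (by linarith)
      have e : a ^ 2 - a * b - a + 2 * b = a * (a - b) + (2 * b - a) := by ring
      linarith [h1, e]
    have heq2 : -((a - 1) / a) - (1 - a - b) / (2 * b)
        = (a ^ 2 - a * b - a + 2 * b) / (2 * a * b) := by field_simp; ring
    have h5 : 0 ≤ -((a - 1) / a) - (1 - a - b) / (2 * b) := by
      rw [heq2]; exact div_nonneg hkey (by positivity)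
    linarith
  have hF4 : (Real.log k + Real.log (m:ℝ) / 2) / Real.log k ≤ Real.log (m:ℝ) := by
    rw [div_le_iff₀ hL0]
    have h1 : 0 ≤ (Real.log (m:ℝ) - 2) * (Real.log k - 1) :=
      mul_nonneg (by linarith) (by linarith)
    have e : (Real.log (m:ℝ) - 2) * (Real.log k - 1)
        = Real.log (m:ℝ) * Real.log k - Real.log (m:ℝ) - 2 * Real.log k + 2 := by ring
    linarith [h1, e]
  have hF40 : 0 ≤ (Real.log k + Real.log (m:ℝ) / 2) / Real.log k := by
    apply div_nonneg _ hL0.le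
    linarith [hLm]
  have hC0' : 0 ≤ 2 * (b + 1) * M ^ 2 / (b * mc) :=
    div_nonneg (by positivity) (mul_pos hb0 hmc0).le
  have hFm0 : 0 ≤ (m:ℝ) ^ (-(2 * α / a)) := Real.rpow_nonneg hm0.le _
  have hLm0 : 0 ≤ Real.log (m:ℝ) := by linarith
  calc (2 * a * M ^ 2 / (b * mc)) * (k ^ 2 * k ^ ((1 - a - b) / b) / k ^ (1 / a))
        * ((m:ℝ) ^ ((1 - a - b) / (2 * b)))
        * ((Real.log k + Real.log (m:ℝ) / 2) / Real.log k)
      ≤ (2 * (b + 1) * M ^ 2 / (b * mc)) * 1 * ((m:ℝ) ^ (-(2 * α / a))) * Real.log (m:ℝ) := by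
        apply mul_le_mul _ hF4 hF40 (by positivity)
        apply mul_le_mul _ hF3 (Real.rpow_nonneg hm0.le _) (by positivity)
        exact mul_le_mul hF1 hF2 hFk0 hC0'
    _ = (2 * (b + 1) * M ^ 2 / (b * mc)) * (m:ℝ) ^ (-(2 * α / a)) * Real.log (m:ℝ) := by
        ring
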